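/- arXiv:1912.04151 — 2 statements merged into one kernel-verified Lean document; each statement's English description precedes it below -/
import Mathlib

section
/- Suppose for every w_j > 0 and treatment x_j, E[Y_i(t; w_j, 1, x_j)] = E[Y_i(t; w_j, 0, x_j)] (null controlled susceptibility effect). Then F_j(t | x_j) = F_j(t | 1 − x_j) for all t ≥ 0, where F_j(·|x_j) is the CDF of the potential initial infection time W_j(x_j). -/
open MeasureTheory

/-- Part of Lemma 4: a null controlled susceptibility effect
(`E[Yᵢ(t;wⱼ,1,xⱼ)] = E[Yᵢ(t;wⱼ,0,xⱼ)]` for all `t`, `wⱼ > 0`, `xⱼ`) forces the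
distributions of the potential initial infection times `Wⱼ(1)` and `Wⱼ(0)` to
coincide: `Fⱼ(t|xⱼ) = Fⱼ(t|1−xⱼ)` for all `t ≥ 0`. -/
theorem null_susceptibility_implies_equal_initial_cdf
    {Ω : Type*} [MeasurableSpace Ω] (μ : Measure Ω) [IsProbabilityMeasure μ]
    (W : Bool → Ω → ℝ) (Z : ℝ → Bool → Bool → Ω → ℝ)
    (hZ : ∀ wj xi xj ω, 0 ≤ Z wj xi xj ω)
    (T : ℝ → Bool → Bool → Ω → ℝ)
    (hT : ∀ wj xi xj ω, T wj xi xj ω =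
      if W xi ω < wj then W xi ω else wj + Z wj xi xj ω)
    (hSE : ∀ t : ℝ, ∀ wj > (0:ℝ), ∀ xj : Bool,
      μ {ω | T wj true xj ω < t} = μ {ω | T wj false xj ω < t}) :
    ∀ t ≥ (0:ℝ), ∀ xj : Bool, μ {ω | W xj ω < t} = μ {ω | W (!xj) ω < t} := by
  intro t ht xj
  have key : ∀ xi : Bool, {ω | T (t+1) xi true ω < t} = {ω | W xi ω < t} := by
    intro xi
    ext ω
    simp only [Set.mem_setOf_eq, hT]
    by_cases h : W xi ω < t + 1
    · simp [h]
    · simp only [h, if_false]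
      constructor
      · intro h2
        exact absurd h2 (not_lt.2 (by linarith [hZ (t+1) xi true ω]))
      · intro h2; exact absurd (h2.trans (by linarith)) h
  have h := hSE t (t+1) (by linarith) true
  rw [key true, key false] at h
  cases xj
  · exact h.symm
  · exact h
end

section
/- Define k(u) = (E[Y_i(t)|W_j = u, X = (0,0)] − F_i(u|0)) / (1 − F_i(u|0)) for 0 ≤ u < t, where E[Y_i(t)|W_j=u, X] = F_i(u|0) + (1 − F_i(u|0))·k(u) by the identification formula. Suppose the controlled contagion effect is strictly positive: for all 0 ≤ u < u' < t, E[Y_i(t; u, 0)] > E[Y_i(t; u', 0)]. Then k is strictly decreasing on [0,t): k(u) > k(u') for u < u'. -/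
open Set

/-- Monotonicity of `k` (proof of Theorem 4): with
`m(u) = Fᵢ(u) + (1 − Fᵢ(u))k(u)` the identified outcome given the partner infected
at `u`, `Fᵢ` nondecreasing with `Fᵢ < 1` on `[0,t)`, `k ∈ [0,1]`, and a strictly
positive controlled contagion effect (`m(u) > m(u')` for `u < u'`), the conditional
infection probability `k` is strictly decreasing on `[0,t)`. -/
theorem contagion_implies_k_decreasing (t : ℝ) (ht : 0 < t) (Fi m k : ℝ → ℝ)
    (hFmono : MonotoneOn Fi (Icc 0 t))
    (hF1 : ∀ u, 0 ≤ u → u < t → Fi u < 1)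
    (hFnn : ∀ u, 0 ≤ Fi u)
    (hid : ∀ u, 0 ≤ u → u < t → m u = Fi u + (1 - Fi u) * k u)
    (hk01 : ∀ u, 0 ≤ u → u < t → 0 ≤ k u ∧ k u ≤ 1)
    (hCE : ∀ u u', 0 ≤ u → u < u' → u' < t → m u' < m u) :
    ∀ u u', 0 ≤ u → u < u' → u' < t → k u' < k u := by
  intro u u' hu huu hu't
  have hu' : (0:ℝ) ≤ u' := le_of_lt (lt_of_le_of_lt hu huu)
  have hut : u < t := lt_trans huu hu't
  have h1 := hid u hu hut
  have h2 := hid u' hu' hu't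
  have h3 := hCE u u' hu huu hu't
  have h4 : Fi u ≤ Fi u' :=
    hFmono ⟨hu, le_of_lt hut⟩ ⟨hu', le_of_lt hu't⟩ (le_of_lt huu)
  have h5 := hF1 u hu hut
  have h6 := (hk01 u' hu' hu't).2
  nlinarith [mul_nonneg (sub_nonneg.2 h4) (sub_nonneg.2 h6)]
end
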